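/- Let x ∈ ℓ∞ with exactly k accumulation points and y ∈ ℓ∞ with exactly n accumulation points, and let z = αx + βy with α ≠ 0 and β ≠ 0. Then max{n/k, k/n} ≤ |L_z| ≤ kn, where L_z is the set of accumulation points of z. -/

import Mathlib

open Filter Topology Set

/-- The set of accumulation points of a real sequence. -/
def AccPts (x : ℕ → ℝ) : Set ℝ := {η | ∀ ε > 0, {n : ℕ | |x n - η| < ε}.Infinite}

lemma accPts_eq_mapClusterPt (x : ℕ → ℝ) :
    AccPts x = {η | MapClusterPt η atTop x} := by
  ext η
  rw [Set.mem_setOf_eq, (Metric.nhds_basis_ball (α := ℝ)).mapClusterPt_iff_frequently]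
  constructor
  · intro h ε hε
    rw [Nat.frequently_atTop_iff_infinite]
    simpa [Metric.mem_ball, Real.dist_eq] using h ε hε
  · intro h ε hε
    have := h ε hε
    rw [Nat.frequently_atTop_iff_infinite] at this
    simpa [Metric.mem_ball, Real.dist_eq] using this

lemma clusterPt_map_iff_neBot {α X : Type*} [TopologicalSpace X] (u : α → X) (F : Filter α)
    (a : X) : ClusterPt a (map u F) ↔ (F ⊓ comap u (𝓝 a)).NeBot := by
  rw [ClusterPt, ← map_neBot_iff u, Filter.push_pull, inf_comm]

lemma key (x y : ℕ → ℝ) (hx : ∃ C, ∀ m, |x m| ≤ C) (hy : ∃ C, ∀ m, |y m| ≤ C)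
    (α β : ℝ) (z : ℕ → ℝ) (hz : z = α • x + β • y) :
    AccPts z ⊆ (fun p : ℝ × ℝ => α * p.1 + β * p.2) '' (AccPts x ×ˢ AccPts y) := by
  intro η hη
  rw [accPts_eq_mapClusterPt] at hη
  obtain ⟨C, hC⟩ := hx
  obtain ⟨D, hD⟩ := hy
  set F : Filter ℕ := atTop ⊓ comap z (𝓝 η) with hF
  haveI hFnb : F.NeBot := (clusterPt_map_iff_neBot z atTop η).1 hη
  have hxF : map x F ≤ 𝓟 (Set.Icc (-C) C) := by
    rw [map_le_iff_le_comap]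
    refine le_trans inf_le_left (le_trans le_top ?_)
    intro s hs
    simp only [mem_comap, mem_principal] at hs ⊢
    obtain ⟨t, ht, hts⟩ := hs
    filter_upwards [univ_mem] with m _
    exact hts (ht ⟨(abs_le.1 (hC m)).1, (abs_le.1 (hC m)).2⟩)
  obtain ⟨a, _, ha⟩ := isCompact_Icc.exists_clusterPt hxF
  set F2 : Filter ℕ := F ⊓ comap x (𝓝 a) with hF2
  haveI : F2.NeBot := (clusterPt_map_iff_neBot x F a).1 ha
  have hyF : map y F2 ≤ 𝓟 (Set.Icc (-D) D) := by
    rw [map_le_iff_le_comap]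
    refine le_trans le_top ?_
    intro s hs
    simp only [mem_comap, mem_principal] at hs ⊢
    obtain ⟨t, ht, hts⟩ := hs
    filter_upwards [univ_mem] with m _
    exact hts (ht ⟨(abs_le.1 (hD m)).1, (abs_le.1 (hD m)).2⟩)
  obtain ⟨b, _, hb⟩ := isCompact_Icc.exists_clusterPt hyF
  set F3 : Filter ℕ := F2 ⊓ comap y (𝓝 b) with hF3
  haveI : F3.NeBot := (clusterPt_map_iff_neBot y F2 b).1 hb
  have hF3top : F3 ≤ atTop := le_trans inf_le_left (le_trans inf_le_left inf_le_left)
  have htz : Tendsto z F3 (𝓝 η) := by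
    rw [tendsto_iff_comap]
    exact le_trans inf_le_left (le_trans inf_le_left inf_le_right)
  have htx : Tendsto x F3 (𝓝 a) := by
    rw [tendsto_iff_comap]
    exact le_trans inf_le_left inf_le_right
  have hty : Tendsto y F3 (𝓝 b) := by
    rw [tendsto_iff_comap]
    exact inf_le_right
  have htz' : Tendsto z F3 (𝓝 (α * a + β * b)) := by
    have : Tendsto (fun m => α * x m + β * y m) F3 (𝓝 (α * a + β * b)) :=
      ((htx.const_mul α).add (hty.const_mul β))
    have hzz : z = fun m => α * x m + β * y m := by
      funext m; simp [hz]
    rwa [hzz]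
  have hval : η = α * a + β * b := tendsto_nhds_unique htz htz'
  refine ⟨(a, b), ⟨?_, ?_⟩, hval.symm⟩
  · rw [accPts_eq_mapClusterPt]
    exact (htx.mapClusterPt).mono hF3top
  · rw [accPts_eq_mapClusterPt]
    exact (hty.mapClusterPt).mono hF3top

lemma ncard_prod' (s t : Set ℝ) : (s ×ˢ t).ncard = s.ncard * t.ncard := by
  rw [← Nat.card_coe_set_eq, ← Nat.card_coe_set_eq, ← Nat.card_coe_set_eq,
    Nat.card_congr (Equiv.Set.prod s t), Nat.card_prod]

lemma count_le (x y : ℕ → ℝ) (hx : ∃ C, ∀ m, |x m| ≤ C) (hy : ∃ C, ∀ m, |y m| ≤ C)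
    (hxf : (AccPts x).Finite) (hyf : (AccPts y).Finite)
    (α β : ℝ) (z : ℕ → ℝ) (hz : z = α • x + β • y) :
    (AccPts z).Finite ∧ (AccPts z).ncard ≤ (AccPts x).ncard * (AccPts y).ncard := by
  have hsub := key x y hx hy α β z hz
  have hfin : ((fun p : ℝ × ℝ => α * p.1 + β * p.2) '' (AccPts x ×ˢ AccPts y)).Finite :=
    (hxf.prod hyf).image _
  refine ⟨hfin.subset hsub, ?_⟩
  calc (AccPts z).ncard ≤ ((fun p : ℝ × ℝ => α * p.1 + β * p.2) ''
        (AccPts x ×ˢ AccPts y)).ncard := Set.ncard_le_ncard hsub hfin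
    _ ≤ (AccPts x ×ˢ AccPts y).ncard := Set.ncard_image_le (hxf.prod hyf)
    _ = (AccPts x).ncard * (AccPts y).ncard := ncard_prod' _ _

theorem stmt_1 (x y : ℕ → ℝ) (hx : ∃ C, ∀ m, |x m| ≤ C) (hy : ∃ C, ∀ m, |y m| ≤ C)
    (k n : ℕ) (hxf : (AccPts x).Finite) (hxk : (AccPts x).ncard = k)
    (hyf : (AccPts y).Finite) (hyn : (AccPts y).ncard = n)
    (α β : ℝ) (hα : α ≠ 0) (hβ : β ≠ 0) (z : ℕ → ℝ) (hz : z = α • x + β • y) :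
    (AccPts z).Finite ∧ n ≤ (AccPts z).ncard * k ∧ k ≤ (AccPts z).ncard * n ∧
      (AccPts z).ncard ≤ k * n := by
  obtain ⟨C, hC⟩ := hx
  obtain ⟨D, hD⟩ := hy
  have hzb : ∃ E, ∀ m, |z m| ≤ E := by
    refine ⟨|α| * C + |β| * D, fun m => ?_⟩
    rw [hz]
    simp only [Pi.add_apply, Pi.smul_apply, smul_eq_mul]
    calc |α * x m + β * y m| ≤ |α * x m| + |β * y m| := abs_add_le _ _
      _ = |α| * |x m| + |β| * |y m| := by rw [abs_mul, abs_mul]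
      _ ≤ |α| * C + |β| * D := by
          gcongr
          exacts [hC m, hD m]
  obtain ⟨hzf, hzcard⟩ := count_le x y ⟨C, hC⟩ ⟨D, hD⟩ hxf hyf α β z hz
  have hxz : x = (1/α) • z + (-β/α) • y := by
    funext m
    simp only [hz, Pi.add_apply, Pi.smul_apply, smul_eq_mul]
    field_simp
    ring
  have hyz : y = (1/β) • z + (-α/β) • x := by
    funext m
    simp only [hz, Pi.add_apply, Pi.smul_apply, smul_eq_mul]
    field_simp
    ring
  obtain ⟨-, hk⟩ := count_le z y hzb ⟨D, hD⟩ hzf hyf (1/α) (-β/α) x hxz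
  obtain ⟨-, hn⟩ := count_le z x hzb ⟨C, hC⟩ hzf hxf (1/β) (-α/β) y hyz
  rw [hxk, hyn] at *
  exact ⟨hzf, hn, hk, hzcard⟩
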